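/- Let R be a weakly Laskerian commutative ring such that the polynomial ring R[X] is weakly Laskerian for some indeterminate X over R, and let I be a proper ideal of R. Then every prime ideal of R minimal over I is an associated prime of I in the Zariski-Samuel sense, i.e. Min I ⊆ ZS(I). -/

import Mathlib

/-- An `R`-module `M` is *weakly Laskerian* if every quotient of `M` has only finitely many
associated prime ideals. -/
def IsWeaklyLaskerian (R : Type*) [CommRing R] (M : Type*) [AddCommGroup M]
    [Module R M] : Prop :=
  ∀ N : Submodule R M, (associatedPrimes R (M ⧸ N)).Finite

open Polynomial in
theorem aux_seq_contradiction {R : Type*} [CommRing R]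
    (hRX : IsWeaklyLaskerian (Polynomial R) (Polynomial R))
    (t : ℕ → R) (Q : ℕ → Ideal R) (hQ : ∀ k, (Q k).IsPrime)
    (ht : ∀ k, t k ∉ Q k) (htQ : ∀ i k, i < k → t i ∈ Q k) : False := by
  classical
  -- the filtration in R
  set B : ℕ → Ideal R := fun k =>
    (⨆ j ∈ Finset.range (k + 1), Q j * Ideal.span {t j}) ⊔
      (⨆ j ∈ Finset.range k, Ideal.span {t j}) with hB
  have hsup_mono : ∀ (f : ℕ → Ideal R) {m n : ℕ}, m ≤ n →
      (⨆ j ∈ Finset.range m, f j) ≤ ⨆ j ∈ Finset.range n, f j := by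
    intro f m n hmn
    refine iSup₂_le fun j hj => ?_
    exact le_iSup₂ (f := fun j _ => f j) j
      (Finset.mem_range.mpr (lt_of_lt_of_le (Finset.mem_range.mp hj) hmn))
  have hBmono : Monotone B := by
    intro m n hmn
    exact sup_le_sup (hsup_mono _ (by omega)) (hsup_mono _ hmn)
  have htB : ∀ {k m : ℕ}, k < m → t k ∈ B m := by
    intro k m hkm
    refine le_sup_right (a := (⨆ j ∈ Finset.range (m+1), Q j * Ideal.span {t j})) ?_
    exact (le_iSup₂ (f := fun j (_ : j ∈ Finset.range m) => Ideal.span {t j}) k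
      (Finset.mem_range.mpr hkm)) (Ideal.mem_span_singleton_self _)
  have hQB : ∀ (k : ℕ) (r : R), r ∈ Q k → r * t k ∈ B k := by
    intro k r hr
    refine le_sup_left (b := (⨆ j ∈ Finset.range k, Ideal.span {t j})) ?_
    refine (le_iSup₂ (f := fun j (_ : j ∈ Finset.range (k+1)) => Q j * Ideal.span {t j}) k
      (Finset.mem_range.mpr (Nat.lt_succ_self k))) ?_
    exact Ideal.mul_mem_mul hr (Ideal.mem_span_singleton_self _)
  have hBQ : ∀ k, B k ≤ Q k := by
    intro k
    refine sup_le (iSup₂_le fun j hj => ?_) (iSup₂_le fun j hj => ?_)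
    · rcases Nat.lt_succ_iff_lt_or_eq.mp (Finset.mem_range.mp hj) with h | rfl
      · refine Ideal.mul_le.mpr fun a _ b hb => ?_
        exact Ideal.mul_mem_left _ a
          ((Ideal.span_le.mpr (by simpa using htQ j k h)) hb)
      · exact Ideal.mul_le.mpr fun a ha b _ => Ideal.mul_mem_right _ _ ha
    · exact Ideal.span_le.mpr (by simpa using htQ j k (Finset.mem_range.mp hj))
  have hcolon : ∀ (k : ℕ) (r : R), r * t k ∈ B k → r ∈ Q k := by
    intro k r hr
    rcases (hQ k).mem_or_mem (hBQ k hr) with h | h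
    · exact h
    · exact absurd h (ht k)
  -- the ideal A of R[X]
  set A : Ideal (Polynomial R) :=
    { carrier := {g | ∀ n, g.coeff n ∈ B n}
      add_mem' := fun hf hg n => by
        rw [Polynomial.coeff_add]; exact add_mem (hf n) (hg n)
      zero_mem' := fun n => by simp
      smul_mem' := fun c g hg => by
        intro n
        rw [smul_eq_mul, Polynomial.coeff_mul]
        refine sum_mem fun x hx => ?_
        have hx2 : x.2 ≤ n := by
          have := Finset.HasAntidiagonal.mem_antidiagonal.mp hx; omega
        exact Ideal.mul_mem_left _ _ (hBmono hx2 (hg x.2)) } with hA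
  have hmemA : ∀ g : Polynomial R, g ∈ A ↔ ∀ n, g.coeff n ∈ B n := fun g => Iff.rfl
  -- the associated primes
  set P : ℕ → Ideal (Polynomial R) := fun k =>
    (Q k).comap (Polynomial.constantCoeff (R := R)) with hP
  have hPmem : ∀ k, P k ∈ associatedPrimes (Polynomial R) (Polynomial R ⧸ A) := by
    intro k
    refine ⟨Ideal.IsPrime.comap _ (hK := hQ k), Submodule.Quotient.mk (C (t k) * X ^ k), ?_⟩
    suffices hsuff : P k = (⊥ : Submodule (Polynomial R) (Polynomial R ⧸ A)).colon
        {Submodule.Quotient.mk (C (t k) * X ^ k)} by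
      rw [← hsuff]; exact (Ideal.IsPrime.comap _ (hK := hQ k)).radical.symm
    ext r
    rw [Submodule.mem_colon_singleton, Submodule.mem_bot, ← Submodule.Quotient.mk_smul,
      Submodule.Quotient.mk_eq_zero]
    have hcoeff : ∀ n, (r • (C (t k) * X ^ k)).coeff n
        = if k ≤ n then r.coeff (n - k) * t k else 0 := by
      intro n
      rw [smul_eq_mul, ← mul_assoc, Polynomial.coeff_mul_X_pow', Polynomial.coeff_mul_C]
    constructor
    · intro hr n
      rw [hcoeff n]
      split_ifs with hkn
      · rcases eq_or_lt_of_le hkn with rfl | hlt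
        · rw [Nat.sub_self]
          exact hQB k _ hr
        · exact Ideal.mul_mem_left _ _ (htB hlt)
      · exact zero_mem _
    · intro hrk
      have h := hrk k
      rw [hcoeff k, if_pos le_rfl, Nat.sub_self] at h
      exact hcolon k _ h
  have hPinj : Function.Injective P := by
    intro k l hkl
    by_contra hne
    have hQeq : Q k = Q l := by
      ext r
      have : (C r ∈ P k) ↔ (C r ∈ P l) := by rw [hkl]
      simpa [hP, Ideal.mem_comap] using this
    rcases lt_or_gt_of_ne hne with h | h
    · exact ht k (by rw [hQeq]; exact htQ k l h)
    · exact ht l (by rw [← hQeq]; exact htQ l k h)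
  exact (hRX A).not_infinite (Set.infinite_of_injective_forall_mem hPinj hPmem)

/-- If `R` is a weakly Laskerian commutative ring such that `R[X]` is weakly Laskerian,
and `I` is a proper ideal of `R`, then every prime minimal over `I` is a Zariski–Samuel
associated prime of `I`, i.e. it equals the radical of `(I : x)` for some `x ∈ R`. -/
theorem minimalPrimes_subset_zariskiSamuel_of_weaklyLaskerian_polynomial {R : Type*}
    [CommRing R] (hR : IsWeaklyLaskerian R R)
    (hRX : IsWeaklyLaskerian (Polynomial R) (Polynomial R))
    (I : Ideal R) (hI : I ≠ ⊤) (p : Ideal R) (hp : p ∈ I.minimalPrimes) :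
    ∃ x : R, p = (Submodule.colon I (Ideal.span {x})).radical := by
  classical
  have hpPrime : p.IsPrime := hp.1.1
  have hIp : I ≤ p := hp.1.2
  have h1p : (1 : R) ∉ p := fun h => hpPrime.ne_top ((Ideal.eq_top_iff_one p).mpr h)
  by_contra hcon
  push_neg at hcon
  set Sat : Set R := {r | ∃ s, s ∉ p ∧ s * r ∈ I} with hSat
  -- powers of elements of p land in Sat
  have hpow : ∀ r ∈ p, ∃ n : ℕ, r ^ n ∈ Sat := by
    intro r hr
    by_contra hno
    push_neg at hno
    set M : Submonoid R :=
      { carrier := {x | ∃ s, s ∉ p ∧ ∃ n : ℕ, x = s * r ^ n}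
        mul_mem' := by
          rintro x y ⟨s₁, hs₁, n₁, rfl⟩ ⟨s₂, hs₂, n₂, rfl⟩
          exact ⟨s₁ * s₂, fun h => ((hpPrime.mem_or_mem h).elim hs₁ hs₂), n₁ + n₂, by ring⟩
        one_mem' := ⟨1, h1p, 0, by ring⟩ } with hM
    have hdisj : Disjoint (I : Set R) (M : Set R) := by
      rw [Set.disjoint_left]
      rintro x hxI ⟨s, hs, n, rfl⟩
      exact hno n ⟨s, hs, hxI⟩
    obtain ⟨q, hq, hIq, hqdisj⟩ := Ideal.exists_le_prime_disjoint I M hdisj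
    have hqp : q ≤ p := by
      intro y hy
      by_contra hyp
      exact Set.disjoint_left.mp hqdisj hy ⟨y, hyp, 0, by ring⟩
    have hpq : p ≤ q := hp.2 ⟨hq, hIq⟩ hqp
    exact Set.disjoint_left.mp hqdisj (hpq hr) ⟨1, h1p, 1, by ring⟩
  -- key step: no finite subset of Sat has radical capturing all of Sat
  have hstep : ∀ F : Finset R, (F : Set R) ⊆ Sat →
      ∃ a, a ∈ Sat ∧ a ∉ (Ideal.span (F : Set R)).radical := by
    intro F hF
    by_contra hno
    push_neg at hno
    set g : R → R := fun f => if h : f ∈ Sat then h.choose else 1 with hg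
    have hgspec : ∀ f ∈ F, g f ∉ p ∧ g f * f ∈ I := by
      intro f hf
      have hfS : f ∈ Sat := hF hf
      simp only [hg, dif_pos hfS]
      exact hfS.choose_spec
    set s : R := ∏ f ∈ F, g f with hs
    have hsp : s ∉ p := by
      intro h
      obtain ⟨f, hf, hfp⟩ := Ideal.IsPrime.prod_mem_iff.mp h
      exact (hgspec f hf).1 hfp
    have hsf : ∀ f ∈ F, f ∈ Submodule.colon I (Ideal.span {s}) := by
      intro f hf
      rw [Ideal.mem_colon_span_singleton]
      have hmul : f * s = (∏ x ∈ F.erase f, g x) * (g f * f) := by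
        rw [hs, ← Finset.mul_prod_erase F g hf]; ring
      rw [hmul]
      exact I.mul_mem_left _ (hgspec f hf).2
    have hspan : Ideal.span (F : Set R) ≤ Submodule.colon I (Ideal.span {s}) :=
      Ideal.span_le.mpr fun f hf => hsf f hf
    have hps : p ≤ (Submodule.colon I (Ideal.span {s})).radical := by
      intro r hr
      obtain ⟨n, hn⟩ := hpow r hr
      have h1 : r ^ n ∈ (Submodule.colon I (Ideal.span {s})).radical :=
        Ideal.radical_mono hspan (hno _ hn)
      exact Ideal.mem_radical_of_pow_mem h1
    have hsp2 : (Submodule.colon I (Ideal.span {s})).radical ≤ p := by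
      have hcol : Submodule.colon I (Ideal.span {s}) ≤ p := by
        intro a ha
        rw [Ideal.mem_colon_span_singleton] at ha
        exact (hpPrime.mem_or_mem (hIp ha)).resolve_right hsp
      calc (Submodule.colon I (Ideal.span {s})).radical ≤ p.radical := Ideal.radical_mono hcol
        _ = p := hpPrime.radical
    exact hcon s (le_antisymm hps hsp2)
  -- build the sequence
  set step : Finset R → R :=
    fun F => if h : (F : Set R) ⊆ Sat then (hstep F h).choose else 0 with hstepdef
  set G : ℕ → Finset R := fun n => Nat.rec ∅ (fun _ F => insert (step F) F) n with hG
  have hGsucc : ∀ n, G (n + 1) = insert (step (G n)) (G n) := fun n => rfl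
  have hGSat : ∀ n, (G n : Set R) ⊆ Sat := by
    intro n
    induction n with
    | zero => simp [hG]
    | succ n ih =>
      rw [hGsucc n, Finset.coe_insert, Set.insert_subset_iff]
      refine ⟨?_, ih⟩
      simp only [hstepdef, dif_pos ih]
      exact (hstep (G n) ih).choose_spec.1
  set t : ℕ → R := fun n => step (G n) with htdef
  have haspec : ∀ n, t n ∈ Sat ∧ t n ∉ (Ideal.span ((G n) : Set R)).radical := by
    intro n
    have h := hGSat n
    simp only [htdef, hstepdef, dif_pos h]
    exact (hstep (G n) h).choose_spec
  have hmemG : ∀ {i k : ℕ}, i < k → t i ∈ G k := by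
    intro i k hik
    induction k with
    | zero => omega
    | succ k ih =>
      rw [hGsucc k]
      rcases Nat.lt_succ_iff_lt_or_eq.mp hik with h | h
      · exact Finset.mem_insert_of_mem (ih h)
      · subst h; exact Finset.mem_insert_self _ _
  have hQex : ∀ k, ∃ Q : Ideal R, Q.IsPrime ∧ Ideal.span ((G k) : Set R) ≤ Q ∧ t k ∉ Q := by
    intro k
    have h := (haspec k).2
    rw [Ideal.radical_eq_sInf] at h
    by_contra hnoQ
    push_neg at hnoQ
    refine h (Ideal.mem_sInf.mpr ?_)
    rintro J ⟨hJle, hJprime⟩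
    by_contra htJ
    exact htJ (hnoQ J hJprime hJle)
  choose Q hQprime hQle hQt using hQex
  exact aux_seq_contradiction hRX t Q hQprime hQt
    (fun i k hik => hQle k (Ideal.subset_span (hmemG hik)))
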